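/- For all integers N, M, n, m with N + M ≥ 0, the following product identity for extended q-binomial coefficients holds: [N n]⁺ · [M m]⁺ = Σ_{l ∈ ℤ} q^{(n−l)(m−l)} [N−m, n−l]⁺ · [M−n, m−l]⁺ · [N+M−n−m+l, l]⁺, where only finitely many summands are nonzero. -/

import Mathlib

noncomputable section
open LaurentPolynomial

def gaussRec (v : LaurentPolynomial ℤ) : ℕ → ℕ → LaurentPolynomial ℤ
  | 0, 0 => 1
  | 0, _ + 1 => 0
  | _ + 1, 0 => 1
  | n + 1, m + 1 => gaussRec v n (m + 1) * v ^ (m + 1) + gaussRec v n m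

/-- `[n m]_v` for integer indices: the Gaussian binomial in the variable `v`,
zero unless `0 ≤ m ≤ n`. -/
def gaussZ (v : LaurentPolynomial ℤ) (n m : ℤ) : LaurentPolynomial ℤ :=
  if 0 ≤ m ∧ m ≤ n then gaussRec v n.toNat m.toNat else 0

/-- The Gaussian binomial coefficient `[n m]_q` as a Laurent polynomial in `q = T 1`. -/
def qbin (n m : ℤ) : LaurentPolynomial ℤ := gaussZ (T 1) n m

/-- The extended q-binomial coefficient `[n m]⁺_q ∈ ℤ[q,q⁻¹]`. -/
def qbinPlus (n m : ℤ) : LaurentPolynomial ℤ :=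
  if 0 ≤ n then qbin n m
  else (-1) ^ (n - m).natAbs * T (-(((n - m) ^ 2 + (n - m)) / 2)) *
    gaussZ (T (-1)) (-m - 1) (-n - 1)


-- ==== basic gaussRec lemmas ====

lemma gaussRec_succ_succ (v : LaurentPolynomial ℤ) (n m : ℕ) :
    gaussRec v (n+1) (m+1) = gaussRec v n (m+1) * v ^ (m+1) + gaussRec v n m := rfl

lemma gaussRec_zero_right (v : LaurentPolynomial ℤ) (n : ℕ) : gaussRec v n 0 = 1 := by
  cases n <;> rfl

lemma gaussRec_eq_zero (v : LaurentPolynomial ℤ) :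
    ∀ {n m : ℕ}, n < m → gaussRec v n m = 0 := by
  intro n
  induction n with
  | zero =>
    intro m hm
    match m, hm with
    | m + 1, _ => rfl
  | succ n ih =>
    intro m hm
    match m, hm with
    | m + 1, hm =>
      rw [gaussRec_succ_succ, ih (by omega), ih (by omega), zero_mul, zero_add]

lemma gaussRec_self (v : LaurentPolynomial ℤ) (n : ℕ) : gaussRec v n n = 1 := by
  induction n with
  | zero => rfl
  | succ n ih => rw [gaussRec_succ_succ, gaussRec_eq_zero v (by omega), zero_mul, zero_add, ih]

-- ==== gaussZ lemmas ====

lemma gaussZ_eq_zero {v : LaurentPolynomial ℤ} {n m : ℤ} (h : ¬(0 ≤ m ∧ m ≤ n)) :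
    gaussZ v n m = 0 := if_neg h

lemma gaussZ_def' {v : LaurentPolynomial ℤ} {n m : ℤ} (h1 : 0 ≤ m) (h2 : m ≤ n) :
    gaussZ v n m = gaussRec v n.toNat m.toNat := if_pos ⟨h1, h2⟩

-- ==== qbinPlus basics ====

lemma qbinPlus_of_nonneg {a b : ℤ} (h : 0 ≤ a) : qbinPlus a b = gaussZ (T 1) a b := if_pos h

lemma qbinPlus_of_neg {a b : ℤ} (h : a < 0) :
    qbinPlus a b = (-1) ^ (a - b).natAbs * T (-(((a - b) ^ 2 + (a - b)) / 2)) *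
      gaussZ (T (-1)) (-b - 1) (-a - 1) := if_neg (by omega)

lemma qbinPlus_eq_zero_of_lt {a b : ℤ} (h : a < b) : qbinPlus a b = 0 := by
  rcases le_or_gt 0 a with ha | ha
  · rw [qbinPlus_of_nonneg ha, gaussZ_eq_zero (by omega)]
  · rw [qbinPlus_of_neg ha, gaussZ_eq_zero (by omega), mul_zero]

lemma qbinPlus_eq_zero_of_neg {a b : ℤ} (h0 : 0 ≤ a) (h : b < 0) : qbinPlus a b = 0 := by
  rw [qbinPlus_of_nonneg h0, gaussZ_eq_zero (by omega)]

lemma qbinPlus_self (a : ℤ) : qbinPlus a a = 1 := by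
  rcases le_or_gt 0 a with ha | ha
  · rw [qbinPlus_of_nonneg ha, gaussZ_def' ha le_rfl, gaussRec_self]
  · rw [qbinPlus_of_neg ha, gaussZ_def' (by omega) le_rfl, gaussRec_self, sub_self]
    norm_num
lemma qbinPlus_zero {a : ℤ} (h : 0 ≤ a) : qbinPlus a 0 = 1 := by
  rw [qbinPlus_of_nonneg h, gaussZ_def' le_rfl h, Int.toNat_zero, gaussRec_zero_right]

lemma qbinPlus_zero' {a : ℤ} (h : a < 0) : qbinPlus a 0 = 0 := by
  rw [qbinPlus_of_neg h, gaussZ_eq_zero (by omega), mul_zero]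

-- ==== parity / division helpers ====

lemma neg_one_pow_sub_one (d : ℤ) :
    ((-1 : LaurentPolynomial ℤ)) ^ (d - 1).natAbs = -((-1) ^ d.natAbs) := by
  rcases Int.even_or_odd d with h | h
  · have h1 : Even d.natAbs := Int.natAbs_even.2 h
    have h2 : Odd (d - 1).natAbs :=
      Int.natAbs_odd.2 (by rcases h with ⟨r, hr⟩; exact ⟨r - 1, by omega⟩)
    rw [h1.neg_one_pow, h2.neg_one_pow]; try norm_num
  · have h1 : Odd d.natAbs := Int.natAbs_odd.2 h
    have h2 : Even (d - 1).natAbs :=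
      Int.natAbs_even.2 (by rcases h with ⟨r, hr⟩; exact ⟨r, by omega⟩)
    rw [h1.neg_one_pow, h2.neg_one_pow]; try norm_num

lemma two_mul_ediv (d : ℤ) : 2 * ((d ^ 2 + d) / 2) = d ^ 2 + d := by
  have h : Even (d ^ 2 + d) := by
    have := Int.even_mul_succ_self d
    rwa [show d * (d + 1) = d ^ 2 + d by ring] at this
  rcases h with ⟨r, hr⟩
  omega

lemma T_one_pow (k : ℕ) : (T 1 : LaurentPolynomial ℤ) ^ k = T (k : ℤ) := by
  rw [T_pow]; norm_num

lemma T_negone_pow (k : ℕ) : (T (-1) : LaurentPolynomial ℤ) ^ k = T (-(k : ℤ)) := by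
  rw [T_pow]; norm_num

-- ==== the uniform Pascal recurrence ====

lemma qbinPlus_pascal (a b : ℤ) :
    qbinPlus a b = T b * qbinPlus (a - 1) b + qbinPlus (a - 1) (b - 1) := by
  rcases lt_trichotomy a 0 with ha | ha | ha
  · -- a < 0
    by_cases hba : b ≤ a
    · by_cases hbe : b = a
      · subst hbe
        rw [qbinPlus_self, qbinPlus_eq_zero_of_lt (by omega), qbinPlus_self, mul_zero, zero_add]
      · -- b ≤ a - 1 < 0 : the mirrored-Gaussian case
        have hb1 : b ≤ a - 1 := by omega
        rw [qbinPlus_of_neg ha, qbinPlus_of_neg (a := a - 1) (b := b) (by omega),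
          qbinPlus_of_neg (a := a - 1) (b := b - 1) (by omega)]
        rw [show a - 1 - (b - 1) = a - b by ring, show a - 1 - b = a - b - 1 by ring,
          show -(a - 1) - 1 = -a by ring, show -(b - 1) - 1 = -b by ring]
        rw [gaussZ_def' (n := -b - 1) (m := -a - 1) (by omega) (by omega),
          gaussZ_def' (n := -b - 1) (m := -a) (by omega) (by omega),
          gaussZ_def' (n := -b) (m := -a) (by omega) (by omega)]
        obtain ⟨A, hA⟩ : ∃ A : ℕ, -a - 1 = (A : ℤ) := ⟨(-a - 1).toNat, by omega⟩
        obtain ⟨B, hB⟩ : ∃ B : ℕ, -b - 1 = (B : ℤ) := ⟨(-b - 1).toNat, by omega⟩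
        have t1 : (-b - 1).toNat = B := by omega
        have t2 : (-a - 1).toNat = A := by omega
        have t3 : (-a).toNat = A + 1 := by omega
        have t4 : (-b).toNat = B + 1 := by omega
        rw [t1, t2, t3, t4, gaussRec_succ_succ]
        have hv : (T (-1) : LaurentPolynomial ℤ) ^ (A + 1) = T a := by
          rw [T_negone_pow]; congr 1 <;> omega
        rw [hv, neg_one_pow_sub_one (a - b)]
        have hT : (T b : LaurentPolynomial ℤ) * T (-(((a - b - 1) ^ 2 + (a - b - 1)) / 2)) =
            T (-(((a - b) ^ 2 + (a - b)) / 2)) * T a := by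
          rw [← T_add, ← T_add]
          congr 1
          have h1 := two_mul_ediv (a - b)
          have h2 := two_mul_ediv (a - b - 1)
          have hx : (a - b) ^ 2 = (a - b - 1) ^ 2 + 2 * (a - b) - 1 := by ring
          set p := (a - b) ^ 2 with hp
          set p' := (a - b - 1) ^ 2 with hp'
          omega
        linear_combination
          (gaussRec (T (-1)) B (A + 1) * (-1 : LaurentPolynomial ℤ) ^ (a - b).natAbs) * hT
    · push_neg at hba
      rw [qbinPlus_eq_zero_of_lt (by omega), qbinPlus_eq_zero_of_lt (by omega),
        qbinPlus_eq_zero_of_lt (by omega), mul_zero, zero_add]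
  · -- a = 0
    subst ha
    rcases lt_trichotomy b 0 with hb | hb | hb
    · rw [qbinPlus_eq_zero_of_neg le_rfl hb,
        qbinPlus_of_neg (a := (0:ℤ) - 1) (b := b) (by omega),
        qbinPlus_of_neg (a := (0:ℤ) - 1) (b := b - 1) (by omega)]
      rw [show -((0:ℤ) - 1) - 1 = 0 by ring, show (0:ℤ) - 1 - b = -b - 1 by ring,
        show (0:ℤ) - 1 - (b - 1) = -b by ring, show -(b - 1) - 1 = -b by ring]
      rw [gaussZ_def' (n := -b - 1) (m := (0:ℤ)) le_rfl (by omega),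
        gaussZ_def' (n := -b) (m := (0:ℤ)) le_rfl (by omega)]
      rw [Int.toNat_zero, gaussRec_zero_right, gaussRec_zero_right,
        neg_one_pow_sub_one (-b)]
      have hT : (T b : LaurentPolynomial ℤ) * T (-(((-b - 1) ^ 2 + (-b - 1)) / 2)) =
          T (-(((-b) ^ 2 + (-b)) / 2)) := by
        rw [← T_add]
        congr 1
        have h1 := two_mul_ediv (-b)
        have h2 := two_mul_ediv (-b - 1)
        have hx : (-b) ^ 2 = (-b - 1) ^ 2 + 2 * (-b) - 1 := by ring
        set p := (-b) ^ 2 with hp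
        set p' := (-b - 1) ^ 2 with hp'
        omega
      linear_combination ((-1 : LaurentPolynomial ℤ) ^ (-b).natAbs) * hT
    · subst hb
      rw [qbinPlus_zero le_rfl, qbinPlus_zero' (by omega), qbinPlus_self, mul_zero, zero_add]
    · rw [qbinPlus_eq_zero_of_lt (by omega), qbinPlus_eq_zero_of_lt (by omega),
        qbinPlus_eq_zero_of_lt (by omega), mul_zero, zero_add]
  · -- 0 < a
    rcases lt_trichotomy b 0 with hb | hb | hb
    · rw [qbinPlus_eq_zero_of_neg (by omega) hb, qbinPlus_eq_zero_of_neg (by omega) hb,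
        qbinPlus_eq_zero_of_neg (by omega) (by omega), mul_zero, zero_add]
    · subst hb
      rw [qbinPlus_zero (by omega), qbinPlus_zero (by omega),
        qbinPlus_eq_zero_of_neg (by omega) (by omega), T_zero, mul_one, add_zero]
    · by_cases hba : b ≤ a
      · by_cases hbe : b = a
        · subst hbe
          rw [qbinPlus_self, qbinPlus_eq_zero_of_lt (by omega), qbinPlus_self, mul_zero, zero_add]
        · obtain ⟨A, hA⟩ : ∃ A : ℕ, a = (A : ℤ) + 1 := ⟨(a - 1).toNat, by omega⟩
          obtain ⟨B, hB⟩ : ∃ B : ℕ, b = (B : ℤ) + 1 := ⟨(b - 1).toNat, by omega⟩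
          rw [qbinPlus_of_nonneg (by omega), qbinPlus_of_nonneg (by omega),
            qbinPlus_of_nonneg (by omega)]
          rw [gaussZ_def' (by omega) (by omega), gaussZ_def' (by omega) (by omega),
            gaussZ_def' (by omega) (by omega)]
          have t1 : a.toNat = A + 1 := by omega
          have t2 : b.toNat = B + 1 := by omega
          have t3 : (a - 1).toNat = A := by omega
          have t4 : (b - 1).toNat = B := by omega
          rw [t1, t2, t3, t4, gaussRec_succ_succ, T_one_pow]
          have : ((B + 1 : ℕ) : ℤ) = b := by omega
          rw [this]
          ring
      · push_neg at hba
        rw [qbinPlus_eq_zero_of_lt (by omega), qbinPlus_eq_zero_of_lt (by omega),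
          qbinPlus_eq_zero_of_lt (by omega), mul_zero, zero_add]

-- ==== the summand ====

def Fq (N M n m l : ℤ) : LaurentPolynomial ℤ :=
  T ((n - l) * (m - l)) * qbinPlus (N - m) (n - l) * qbinPlus (M - n) (m - l) *
    qbinPlus (N + M - n - m + l) l

lemma support_bound {x1 y1 x2 y2 x3 y3 E : ℤ}
    (h : T E * qbinPlus x1 y1 * qbinPlus x2 y2 * qbinPlus x3 y3 ≠ 0) :
    y1 ≤ x1 ∧ y2 ≤ x2 ∧ y3 ≤ x3 ∧ (0 ≤ x1 → 0 ≤ y1) ∧ (0 ≤ x2 → 0 ≤ y2) ∧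
      (0 ≤ x3 → 0 ≤ y3) := by
  have p1 : qbinPlus x1 y1 ≠ 0 := fun hz => h (by rw [hz]; ring)
  have p2 : qbinPlus x2 y2 ≠ 0 := fun hz => h (by rw [hz]; ring)
  have p3 : qbinPlus x3 y3 ≠ 0 := fun hz => h (by rw [hz]; ring)
  refine ⟨?_, ?_, ?_, ?_, ?_, ?_⟩
  · by_contra hc; exact p1 (qbinPlus_eq_zero_of_lt (by omega))
  · by_contra hc; exact p2 (qbinPlus_eq_zero_of_lt (by omega))
  · by_contra hc; exact p3 (qbinPlus_eq_zero_of_lt (by omega))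
  · intro h0; by_contra hc; exact p1 (qbinPlus_eq_zero_of_neg h0 (by omega))
  · intro h0; by_contra hc; exact p2 (qbinPlus_eq_zero_of_neg h0 (by omega))
  · intro h0; by_contra hc; exact p3 (qbinPlus_eq_zero_of_neg h0 (by omega))

lemma finite_of_bounded {f : ℤ → LaurentPolynomial ℤ} (lo hi : ℤ)
    (h : ∀ l, f l ≠ 0 → lo ≤ l ∧ l ≤ hi) : (Function.support f).Finite :=
  (Set.finite_Icc lo hi).subset fun l hl => Set.mem_Icc.2 (h l hl)

lemma Fq_bound (N M n m : ℤ) : ∀ l, Fq N M n m l ≠ 0 → n + m - N ≤ l ∧ l ≤ max n m := by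
  intro l hl
  unfold Fq at hl
  obtain ⟨h1, h2, h3, s1, s2, s3⟩ := support_bound hl
  refine ⟨by omega, ?_⟩
  rcases le_or_gt 0 (N - m) with hc | hc
  · have := s1 hc
    simp only [le_max_iff]; left; omega
  · have hK : 0 ≤ M - n := by omega
    have := s2 hK
    simp only [le_max_iff]; right; omega

lemma Fq_supp_finite (N M n m : ℤ) : (Function.support fun l => Fq N M n m l).Finite :=
  finite_of_bounded _ _ (Fq_bound N M n m)

lemma Fq_swap (N M n m l : ℤ) : Fq N M n m l = Fq M N m n l := by
  unfold Fq
  rw [show (m - l) * (n - l) = (n - l) * (m - l) by ring,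
    show M + N - m - n + l = N + M - n - m + l by ring]
  ring

def Eqn (N M n m : ℤ) : Prop := qbinPlus N n * qbinPlus M m = ∑ᶠ l, Fq N M n m l

lemma Eqn_swap {N M n m : ℤ} (h : Eqn N M n m) : Eqn M N m n := by
  unfold Eqn at *
  rw [mul_comm, h]
  exact finsum_congr fun l => Fq_swap N M n m l

lemma trivial_case {N M n m : ℤ} (h : N + M - n - m < 0) : Eqn N M n m := by
  unfold Eqn
  have hR : ∀ l : ℤ, Fq N M n m l = 0 := by
    intro l; unfold Fq
    rw [qbinPlus_eq_zero_of_lt (show N + M - n - m + l < l by omega), mul_zero]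
  rw [finsum_congr hR, finsum_zero]
  rcases le_or_gt n N with h1 | h1
  · rcases le_or_gt m M with h2 | h2
    · omega
    · rw [qbinPlus_eq_zero_of_lt h2, mul_zero]
  · rw [qbinPlus_eq_zero_of_lt h1, zero_mul]

lemma base00 {A B : ℤ} (h : 0 ≤ A + B) : Eqn A B 0 0 := by
  unfold Eqn
  rcases le_or_gt 0 A with hA | hA
  · rcases le_or_gt 0 B with hB | hB
    · have hv : ∀ l : ℤ, l ≠ 0 → Fq A B 0 0 l = 0 := by
        intro l hl
        unfold Fq
        rcases lt_or_gt_of_ne hl with hneg | hpos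
        · rcases le_or_gt 0 (A + B - 0 - 0 + l) with hc | hc
          · rw [qbinPlus_eq_zero_of_neg hc hneg]; ring
          · rw [qbinPlus_eq_zero_of_lt (a := A - 0) (b := 0 - l) (by omega)]; ring
        · rw [qbinPlus_eq_zero_of_neg (a := A - 0) (b := 0 - l) (by omega) (by omega)]; ring
      rw [finsum_eq_single _ 0 hv]
      unfold Fq
      rw [show (0:ℤ) - 0 = 0 by ring, show A - 0 = A by ring, show B - 0 = B by ring,
        show A + B - 0 - 0 + 0 = A + B by ring, show (0:ℤ) * 0 = 0 by ring, T_zero,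
        qbinPlus_zero hA, qbinPlus_zero hB, qbinPlus_zero h]
      ring
    · rw [qbinPlus_zero' hB, mul_zero]
      have hv : ∀ l : ℤ, Fq A B 0 0 l = 0 := by
        intro l; unfold Fq
        rcases le_or_gt (0 - l) B with hc | hc
        · rw [qbinPlus_eq_zero_of_neg (a := A - 0) (b := 0 - l) (by omega) (by omega)]; ring
        · rw [qbinPlus_eq_zero_of_lt (a := B - 0) (b := 0 - l) (by omega)]; ring
      rw [finsum_congr hv, finsum_zero]
  · rw [qbinPlus_zero' hA, zero_mul]
    have hv : ∀ l : ℤ, Fq A B 0 0 l = 0 := by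
      intro l; unfold Fq
      rcases le_or_gt (0 - l) A with hc | hc
      · rw [qbinPlus_eq_zero_of_neg (a := B - 0) (b := 0 - l) (by omega) (by omega)]; ring
      · rw [qbinPlus_eq_zero_of_lt (a := A - 0) (b := 0 - l) (by omega)]; ring
    rw [finsum_congr hv, finsum_zero]

-- ==== auxiliary summands for the recurrence ====

def G2 (N M n m l : ℤ) : LaurentPolynomial ℤ :=
  T ((n + 1 - l) * (m - l)) * qbinPlus (N - m) (n - l) * qbinPlus (M - n - 1) (m - l) *
    qbinPlus (N + M - n - m + l) l

def G3 (N M n m l : ℤ) : LaurentPolynomial ℤ :=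
  T ((n + 1 - l) * (m - l) + (n + 1 - l)) * qbinPlus (N - m) (n + 1 - l) *
    qbinPlus (M - n - 1) (m - l) * qbinPlus (N + M - n - m + l - 1) (l - 1)

lemma G2_bound (N M n m : ℤ) : ∀ l, G2 N M n m l ≠ 0 → n + m - N ≤ l ∧ l ≤ max n m + 1 := by
  intro l hl
  unfold G2 at hl
  obtain ⟨h1, h2, h3, s1, s2, s3⟩ := support_bound hl
  refine ⟨by omega, ?_⟩
  rcases le_or_gt 0 (N - m) with hc | hc
  · have := s1 hc
    omega
  · have hc2 : 0 ≤ M - n - 1 := by omega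
    have := s2 hc2
    omega

lemma G3_bound (N M n m : ℤ) : ∀ l, G3 N M n m l ≠ 0 → n + m - N ≤ l ∧ l ≤ max n m + 1 := by
  intro l hl
  unfold G3 at hl
  obtain ⟨h1, h2, h3, s1, s2, s3⟩ := support_bound hl
  refine ⟨by omega, ?_⟩
  rcases le_or_gt 0 (N - m) with hc | hc
  · have := s1 hc
    omega
  · have hc2 : 0 ≤ M - n - 1 := by omega
    have := s2 hc2
    omega

-- ==== the key recurrence for the sums ====

lemma R1 (N M n m : ℤ) :
    (∑ᶠ l, Fq (N + 1) M (n + 1) m l) =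
      T (n + 1) * (∑ᶠ l, Fq N M (n + 1) m l) + ∑ᶠ l, Fq N M n m l := by
  have hA : ∀ l, Fq (N + 1) M (n + 1) m l =
      T (n + 1) * Fq N M (n + 1) m l + G2 N M n m l + G3 N M n m l := by
    intro l
    have hp1 : qbinPlus (N + 1 - m) (n + 1 - l) =
        T (n + 1 - l) * qbinPlus (N - m) (n + 1 - l) + qbinPlus (N - m) (n - l) := by
      have h := qbinPlus_pascal (N + 1 - m) (n + 1 - l)
      rw [show N + 1 - m - 1 = N - m by ring, show n + 1 - l - 1 = n - l by ring] at h
      exact h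
    have hp3 : qbinPlus (N + M - n - m + l) l =
        T l * qbinPlus (N + M - n - m + l - 1) l + qbinPlus (N + M - n - m + l - 1) (l - 1) :=
      qbinPlus_pascal _ _
    have tA : (T ((n + 1 - l) * (m - l)) : LaurentPolynomial ℤ) * T (n + 1 - l) * T l =
        T (n + 1) * T ((n + 1 - l) * (m - l)) := by
      rw [← T_add, ← T_add, ← T_add]; congr 1; ring
    have tB : (T ((n + 1 - l) * (m - l)) : LaurentPolynomial ℤ) * T (n + 1 - l) =
        T ((n + 1 - l) * (m - l) + (n + 1 - l)) := (T_add _ _).symm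
    unfold Fq G2 G3
    rw [show M - (n + 1) = M - n - 1 by ring, show N + 1 + M - (n + 1) - m + l = N + M - n - m + l by ring,
      show N + M - (n + 1) - m + l = N + M - n - m + l - 1 by ring]
    rw [hp1, hp3]
    linear_combination
      (qbinPlus (N - m) (n + 1 - l) * qbinPlus (M - n - 1) (m - l) *
        qbinPlus (N + M - n - m + l - 1) l) * tA +
      (qbinPlus (N - m) (n + 1 - l) * qbinPlus (M - n - 1) (m - l) *
        qbinPlus (N + M - n - m + l - 1) (l - 1)) * tB
  have hB : ∀ l, Fq N M n m l = G2 N M n m l + G3 N M n m (l + 1) := by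
    intro l
    have hp2 : qbinPlus (M - n) (m - l) =
        T (m - l) * qbinPlus (M - n - 1) (m - l) + qbinPlus (M - n - 1) (m - l - 1) :=
      qbinPlus_pascal _ _
    have tC : (T ((n - l) * (m - l)) : LaurentPolynomial ℤ) * T (m - l) =
        T ((n + 1 - l) * (m - l)) := by
      rw [← T_add]; congr 1; ring
    have tD : (T ((n + 1 - (l + 1)) * (m - (l + 1)) + (n + 1 - (l + 1))) : LaurentPolynomial ℤ) =
        T ((n - l) * (m - l)) := by
      congr 1; ring
    unfold Fq G2 G3
    rw [show n + 1 - (l + 1) = n - l by ring, show m - (l + 1) = m - l - 1 by ring,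
      show N + M - n - m + (l + 1) - 1 = N + M - n - m + l by ring,
      show l + 1 - 1 = l by ring] at *
    rw [hp2, tD]
    linear_combination
      (qbinPlus (N - m) (n - l) * qbinPlus (M - n - 1) (m - l) *
        qbinPlus (N + M - n - m + l) l) * tC
  have f1 : (Function.support fun l => Fq N M (n + 1) m l).Finite := Fq_supp_finite N M (n + 1) m
  have fg1 : (Function.support fun l => T (n + 1) * Fq N M (n + 1) m l).Finite :=
    finite_of_bounded (n + 1 + m - N) (max (n + 1) m)
      (fun l hl => Fq_bound N M (n + 1) m l (fun hz => hl (by rw [hz, mul_zero])))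
  have fg2 : (Function.support fun l => G2 N M n m l).Finite :=
    finite_of_bounded _ _ (G2_bound N M n m)
  have fg3 : (Function.support fun l => G3 N M n m l).Finite :=
    finite_of_bounded _ _ (G3_bound N M n m)
  have fg3' : (Function.support fun l => G3 N M n m (l + 1)).Finite :=
    finite_of_bounded (n + m - N - 1) (max n m)
      (fun l hl => by have := G3_bound N M n m (l + 1) hl; omega)
  have e1 : (∑ᶠ l, Fq (N + 1) M (n + 1) m l) =
      T (n + 1) * (∑ᶠ l, Fq N M (n + 1) m l) + (∑ᶠ l, G2 N M n m l) + ∑ᶠ l, G3 N M n m l := by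
    calc ∑ᶠ l, Fq (N + 1) M (n + 1) m l
        = ∑ᶠ l, (T (n + 1) * Fq N M (n + 1) m l + G2 N M n m l + G3 N M n m l) :=
          finsum_congr hA
      _ = (∑ᶠ l, (T (n + 1) * Fq N M (n + 1) m l + G2 N M n m l)) + ∑ᶠ l, G3 N M n m l :=
          finsum_add_distrib ((fg1.union fg2).subset (Function.support_add _ _)) fg3
      _ = ((∑ᶠ l, T (n + 1) * Fq N M (n + 1) m l) + ∑ᶠ l, G2 N M n m l) + ∑ᶠ l, G3 N M n m l := by
          rw [finsum_add_distrib fg1 fg2]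
      _ = T (n + 1) * (∑ᶠ l, Fq N M (n + 1) m l) + (∑ᶠ l, G2 N M n m l) + ∑ᶠ l, G3 N M n m l := by
          rw [mul_finsum' _ _ f1]
  have e3 : (∑ᶠ l, G3 N M n m (l + 1)) = ∑ᶠ l, G3 N M n m l := by
    have h := finsum_comp_equiv (Equiv.addRight (1 : ℤ)) (f := fun l => G3 N M n m l)
    simp only [Equiv.coe_addRight] at h
    exact h
  have e2 : (∑ᶠ l, Fq N M n m l) = (∑ᶠ l, G2 N M n m l) + ∑ᶠ l, G3 N M n m l := by
    calc ∑ᶠ l, Fq N M n m l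
        = ∑ᶠ l, (G2 N M n m l + G3 N M n m (l + 1)) := finsum_congr hB
      _ = (∑ᶠ l, G2 N M n m l) + ∑ᶠ l, G3 N M n m (l + 1) := finsum_add_distrib fg2 fg3'
      _ = (∑ᶠ l, G2 N M n m l) + ∑ᶠ l, G3 N M n m l := by rw [e3]
  rw [e1, e2]
  ring

-- ==== induction steps ====

lemma step_pos (k : ℤ) (IH : ∀ N M n m : ℤ, N + M - n - m < k → Eqn N M n m)
    {N M n m : ℤ} (hlev : N + M - n - m = k) (h1 : Eqn (N - 1) M (n - 1) m) :
    Eqn N M n m := by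
  have hIH : Eqn (N - 1) M n m := IH _ _ _ _ (by omega)
  have r := R1 (N - 1) M (n - 1) m
  simp only [show N - 1 + 1 = N by ring, show n - 1 + 1 = n by ring] at r
  unfold Eqn at *
  rw [r, ← hIH, ← h1, qbinPlus_pascal N n]
  ring

lemma step_neg (k : ℤ) (IH : ∀ N M n m : ℤ, N + M - n - m < k → Eqn N M n m)
    {N M n m : ℤ} (hlev : N + M - n - m = k) (h1 : Eqn (N + 1) M (n + 1) m) :
    Eqn N M n m := by
  have hIH : Eqn N M (n + 1) m := IH _ _ _ _ (by omega)
  have r := R1 N M n m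
  unfold Eqn at *
  rw [← h1, ← hIH] at r
  have p := qbinPlus_pascal (N + 1) (n + 1)
  simp only [show N + 1 - 1 = N by ring, show n + 1 - 1 = n by ring] at p
  rw [p] at r
  linear_combination r

-- ==== the master lemma ====

lemma key : ∀ (k : ℕ) (N M n m : ℤ), N + M - n - m < (k : ℤ) → Eqn N M n m := by
  intro k
  induction k with
  | zero => intro N M n m h; exact trivial_case (by omega)
  | succ k IHk =>
    intro N M n m hk
    rcases lt_or_ge (N + M - n - m) (k : ℤ) with h | h
    · exact IHk N M n m h
    have hlev : N + M - n - m = (k : ℤ) := by omega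
    clear hk h
    have IH' : ∀ N M n m : ℤ, N + M - n - m < (k : ℤ) → Eqn N M n m := IHk
    have Hm : ∀ (j : ℕ) (N M m : ℤ), m.natAbs ≤ j → N + M - 0 - m = (k : ℤ) → Eqn N M 0 m := by
      intro j
      induction j with
      | zero =>
        intro N M m hm hl
        have hm0 : m = 0 := by omega
        subst hm0
        exact base00 (by omega)
      | succ j IHj =>
        intro N M m hm hl
        rcases lt_trichotomy m 0 with hm0 | hm0 | hm0
        · have h1 : Eqn N (M + 1) 0 (m + 1) := IHj N (M + 1) (m + 1) (by omega) (by omega)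
          have h2 : Eqn (M + 1) N (m + 1) 0 := Eqn_swap h1
          have h3 : Eqn M N m 0 := step_neg (k : ℤ) IH' (by omega) h2
          exact Eqn_swap h3
        · subst hm0
          exact base00 (by omega)
        · have h1 : Eqn N (M - 1) 0 (m - 1) := IHj N (M - 1) (m - 1) (by omega) (by omega)
          have h2 : Eqn (M - 1) N (m - 1) 0 := Eqn_swap h1
          have h3 : Eqn M N m 0 := step_pos (k : ℤ) IH' (by omega) h2
          exact Eqn_swap h3
    have Hn : ∀ (j : ℕ) (N M n m : ℤ), n.natAbs ≤ j → N + M - n - m = (k : ℤ) →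
        Eqn N M n m := by
      intro j
      induction j with
      | zero =>
        intro N M n m hn hl
        have hn0 : n = 0 := by omega
        subst hn0
        exact Hm m.natAbs N M m le_rfl hl
      | succ j IHj =>
        intro N M n m hn hl
        rcases lt_trichotomy n 0 with hn0 | hn0 | hn0
        · exact step_neg (k : ℤ) IH' hl (IHj (N + 1) M (n + 1) m (by omega) (by omega))
        · subst hn0
          exact Hm m.natAbs N M m le_rfl hl
        · exact step_pos (k : ℤ) IH' hl (IHj (N - 1) M (n - 1) m (by omega) (by omega))
    exact Hn n.natAbs N M n m le_rfl hlev

/-- the product identity for extended q-binomial coefficients. -/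
theorem qbinPlus_product (N M n m : ℤ) (h : 0 ≤ N + M) :
    (Function.support (fun l : ℤ =>
        T ((n - l) * (m - l)) * qbinPlus (N - m) (n - l) * qbinPlus (M - n) (m - l) *
          qbinPlus (N + M - n - m + l) l)).Finite ∧
    qbinPlus N n * qbinPlus M m =
      ∑ᶠ l : ℤ, T ((n - l) * (m - l)) * qbinPlus (N - m) (n - l) *
        qbinPlus (M - n) (m - l) * qbinPlus (N + M - n - m + l) l := by

  constructor
  · exact finite_of_bounded _ _ (Fq_bound N M n m)
  · have hk := key ((N + M - n - m).toNat + 1) N M n m (by omega)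
    unfold Eqn Fq at hk
    exact hk

end
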